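/- Every finite group G that is the product G = AB of two cyclic subgroups A and B is supersoluble. -/

import Mathlib

/-- A group is supersoluble if it has a finite normal series with cyclic factors. -/
def IsSupersolvable (G : Type*) [Group G] : Prop :=
  ∃ (n : ℕ) (s : Fin (n + 1) → Subgroup G),
    Monotone s ∧ s 0 = ⊥ ∧ s (Fin.last n) = ⊤ ∧
    (∀ i : Fin (n + 1), (s i).Normal) ∧
    (∀ i : Fin n, ∃ x ∈ s i.succ, ∀ y ∈ s i.succ, ∃ k : ℤ, y * (x ^ k)⁻¹ ∈ s i.castSucc)

section Aux

variable {G : Type*} [Group G]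

/-- In a finite cyclic group, subgroups with the same cardinality are equal. -/
lemma subgroup_eq_of_card_eq {H : Type*} [Group H] [Finite H] [IsCyclic H]
    {P Q : Subgroup H} (h : Nat.card P = Nat.card Q) : P = Q := by
  classical
  cases nonempty_fintype H
  have key : ∀ P Q : Subgroup H, Nat.card P = Nat.card Q → P ≤ Q := by
    intro P Q hPQ
    have hn : 0 < Nat.card Q := Nat.card_pos
    have hQcard : (Set.toFinset (Q : Set H)).card = Nat.card Q := by
      rw [Set.toFinset_card, Nat.card_eq_fintype_card]
      rfl
    have hsub : Set.toFinset (Q : Set H) ⊆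
        Finset.univ.filter (fun a : H => a ^ (Nat.card Q) = 1) := by
      intro x hx
      simp only [Set.mem_toFinset, SetLike.mem_coe] at hx
      simp only [Finset.mem_filter, Finset.mem_univ, true_and]
      have h1 : (⟨x, hx⟩ : Q) ^ (Nat.card Q) = 1 := pow_card_eq_one'
      have h2 := congrArg (Subtype.val) h1
      push_cast at h2
      exact h2
    have hcard : (Finset.univ.filter (fun a : H => a ^ (Nat.card Q) = 1)).card ≤
        (Set.toFinset (Q : Set H)).card := by
      rw [hQcard]
      exact IsCyclic.card_pow_eq_one_le hn
    have heq : Set.toFinset (Q : Set H) =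
        Finset.univ.filter (fun a : H => a ^ (Nat.card Q) = 1) :=
      Finset.eq_of_subset_of_card_le hsub hcard
    intro x hxP
    have hx1 : x ^ (Nat.card Q) = 1 := by
      have h1 : (⟨x, hxP⟩ : P) ^ (Nat.card P) = 1 := pow_card_eq_one'
      have h2 := congrArg (Subtype.val) h1
      push_cast at h2
      rwa [hPQ] at h2
    have : x ∈ Set.toFinset (Q : Set H) := by
      rw [heq]
      simp only [Finset.mem_filter, Finset.mem_univ, true_and]
      exact hx1
    simpa [Set.mem_toFinset] using this
  exact le_antisymm (key P Q h) (key Q P h.symm)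

/-- Elements of a cyclic subgroup commute. -/
lemma mul_comm_of_mem_cyclic {A : Subgroup G} (hA : IsCyclic A) {c u : G}
    (hc : c ∈ A) (hu : u ∈ A) : c * u = u * c := by
  obtain ⟨g, hg⟩ := hA.exists_generator
  obtain ⟨i, hi⟩ := Subgroup.mem_zpowers_iff.mp (hg ⟨c, hc⟩)
  obtain ⟨j, hj⟩ := Subgroup.mem_zpowers_iff.mp (hg ⟨u, hu⟩)
  have hc' : c = ((g : G)) ^ i := by
    have h2 := congrArg (Subtype.val) hi
    push_cast at h2
    exact h2.symm
  have hu' : u = ((g : G)) ^ j := by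
    have h2 := congrArg (Subtype.val) hj
    push_cast at h2
    exact h2.symm
  rw [hc', hu', ← zpow_add, ← zpow_add, add_comm]

/-- Key lemma (Huppert): if `G = AB` with `A`, `B` cyclic, `|B| ≤ |A|` and
`G` nontrivial, then the normal core of `A` is nontrivial. -/
lemma normalCore_ne_bot [Finite G] (A B : Subgroup G)
    (hA : IsCyclic A) (hB : IsCyclic B)
    (hprod : ∀ g : G, ∃ a ∈ A, ∃ b ∈ B, g = a * b)
    (hle : Nat.card B ≤ Nat.card A) (htop : (⊤ : Subgroup G) ≠ ⊥) :
    A.normalCore ≠ ⊥ := by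
  intro hcore
  have hAtop : A ≠ ⊤ := by
    rintro rfl
    rw [Subgroup.normalCore_eq_self] at hcore
    exact htop hcore
  obtain ⟨y0, hy0⟩ := hB.exists_generator
  set y : G := (y0 : G) with hy
  have hyB : y ∈ B := y0.2
  have hyA : y ∉ A := by
    intro hyA
    apply hAtop
    rw [eq_top_iff]
    intro g _
    obtain ⟨a, ha, b, hb, rfl⟩ := hprod g
    obtain ⟨k, hk⟩ := Subgroup.mem_zpowers_iff.mp (hy0 ⟨b, hb⟩)
    have hb' : b = y ^ k := by
      have h2 := congrArg (Subtype.val) hk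
      push_cast at h2
      exact h2.symm
    exact mul_mem ha (hb' ▸ zpow_mem hyA k)
  -- The "stabilizer" {d ∈ A : y⁻¹ d y ∈ A} is trivial
  have hS : ∀ d : G, d ∈ A → y⁻¹ * d * y ∈ A → d = 1 := by
    intro d hdA hdyA
    by_contra hd1
    have hord : orderOf d ≠ 0 := (orderOf_pos d).ne'
    have hn1 : orderOf d ≠ 1 := fun h => hd1 (orderOf_eq_one_iff.mp h)
    have hp : (orderOf d).minFac.Prime := Nat.minFac_prime hn1
    set p := (orderOf d).minFac with hpdef
    set u := d ^ (orderOf d / p) with hu_def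
    have hu : orderOf u = p := orderOf_pow_orderOf_div hord (Nat.minFac_dvd _)
    have huA : u ∈ A := pow_mem hdA _
    have hconj : y⁻¹ * u * y = (y⁻¹ * d * y) ^ (orderOf d / p) := by
      rw [hu_def]
      have h2 := conj_pow (i := orderOf d / p) (a := y⁻¹) (b := d)
      rw [inv_inv] at h2
      exact h2.symm
    have huS : y⁻¹ * u * y ∈ A := by
      rw [hconj]; exact pow_mem hdyA _
    have hPA : Subgroup.zpowers u ≤ A := by rw [Subgroup.zpowers_le]; exact huA
    have hP'A : Subgroup.zpowers (y⁻¹ * u * y) ≤ A := by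
      rw [Subgroup.zpowers_le]; exact huS
    have hcP : Nat.card (Subgroup.zpowers u) = p := by rw [Nat.card_zpowers, hu]
    have hcP' : Nat.card (Subgroup.zpowers (y⁻¹ * u * y)) = p := by
      rw [Nat.card_zpowers]
      have hsemi : SemiconjBy y⁻¹ u (y⁻¹ * u * y) := by
        unfold SemiconjBy
        group
      rw [← SemiconjBy.orderOf_eq y⁻¹ hsemi, hu]
    -- uniqueness of subgroups of order p in the cyclic group A
    have hPP' : Subgroup.zpowers u = Subgroup.zpowers (y⁻¹ * u * y) := by
      haveI : IsCyclic A := hA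
      have e1 : Nat.card ((Subgroup.zpowers u).subgroupOf A)
          = Nat.card (Subgroup.zpowers u) :=
        Nat.card_congr (Subgroup.subgroupOfEquivOfLe hPA).toEquiv
      have e2 : Nat.card ((Subgroup.zpowers (y⁻¹ * u * y)).subgroupOf A)
          = Nat.card (Subgroup.zpowers (y⁻¹ * u * y)) :=
        Nat.card_congr (Subgroup.subgroupOfEquivOfLe hP'A).toEquiv
      have hsub : (Subgroup.zpowers u).subgroupOf A
          = (Subgroup.zpowers (y⁻¹ * u * y)).subgroupOf A :=
        subgroup_eq_of_card_eq (by rw [e1, e2, hcP, hcP'])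
      calc Subgroup.zpowers u = Subgroup.zpowers u ⊓ A := (inf_of_le_left hPA).symm
        _ = ((Subgroup.zpowers u).subgroupOf A).map A.subtype :=
            (Subgroup.subgroupOf_map_subtype _ A).symm
        _ = ((Subgroup.zpowers (y⁻¹ * u * y)).subgroupOf A).map A.subtype := by rw [hsub]
        _ = Subgroup.zpowers (y⁻¹ * u * y) ⊓ A := Subgroup.subgroupOf_map_subtype _ A
        _ = Subgroup.zpowers (y⁻¹ * u * y) := inf_of_le_left hP'A
    -- y normalizes zpowers u
    have hyuy : y * u * y⁻¹ ∈ Subgroup.zpowers u := by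
      have hu' : u ∈ Subgroup.zpowers (y⁻¹ * u * y) := by
        rw [← hPP']; exact Subgroup.mem_zpowers u
      obtain ⟨m, hm⟩ := Subgroup.mem_zpowers_iff.mp hu'
      have hcz := conj_zpow (i := m) (a := y⁻¹) (b := u)
      rw [inv_inv] at hcz
      rw [hcz] at hm
      have h2 : y * (y⁻¹ * u ^ m * y) * y⁻¹ = u ^ m := by group
      rw [hm] at h2
      rw [h2]
      exact zpow_mem (Subgroup.mem_zpowers u) m
    have hyN : y ∈ Subgroup.normalizer (Subgroup.zpowers u : Set G) := by
      rw [Subgroup.mem_normalizer_iff'']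
      intro h
      constructor
      · intro hh
        obtain ⟨k, hk⟩ := Subgroup.mem_zpowers_iff.mp hh
        have hcz := conj_zpow (i := k) (a := y⁻¹) (b := u)
        rw [inv_inv] at hcz
        rw [← hk, ← hcz, hPP']
        exact zpow_mem (Subgroup.mem_zpowers _) k
      · intro hh
        obtain ⟨k, hk⟩ := Subgroup.mem_zpowers_iff.mp hh
        have h3 : y * (y⁻¹ * h * y) * y⁻¹ = h := by group
        rw [← hk] at h3
        rw [← h3]
        have h4 : y * u ^ k * y⁻¹ = (y * u * y⁻¹) ^ k :=
          (conj_zpow (i := k) (a := y) (b := u)).symm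
        rw [h4]
        exact zpow_mem hyuy k
    -- A normalizes zpowers u
    have hAN : ∀ a ∈ A, a ∈ Subgroup.normalizer (Subgroup.zpowers u : Set G) := by
      intro a haA
      rw [Subgroup.mem_normalizer_iff'']
      intro h
      have key2 : ∀ h', h' ∈ Subgroup.zpowers u → a * h' * a⁻¹ = h' := by
        intro h' hh'
        have hcomm := mul_comm_of_mem_cyclic hA haA (hPA hh')
        rw [hcomm, mul_assoc, mul_inv_cancel, mul_one]
      constructor
      · intro hh
        have key1 : a⁻¹ * h * a = h := by
          have hcomm := mul_comm_of_mem_cyclic hA (hPA hh) haA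
          rw [mul_assoc, hcomm, ← mul_assoc, inv_mul_cancel, one_mul]
        rw [key1]; exact hh
      · intro hh
        have h2 : a * (a⁻¹ * h * a) * a⁻¹ = h := by group
        have h3 := key2 _ hh
        have h4 : a⁻¹ * h * a = h := h3.symm.trans h2
        exact h4 ▸ hh
    have hN : Subgroup.normalizer (Subgroup.zpowers u : Set G) = ⊤ := by
      rw [eq_top_iff]
      intro g _
      obtain ⟨a, ha, b, hb, rfl⟩ := hprod g
      have hbN : b ∈ Subgroup.normalizer (Subgroup.zpowers u : Set G) := by
        obtain ⟨k, hk⟩ := Subgroup.mem_zpowers_iff.mp (hy0 ⟨b, hb⟩)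
        have hb' : b = y ^ k := by
          have h2 := congrArg (Subtype.val) hk
          push_cast at h2
          exact h2.symm
        rw [hb']
        exact zpow_mem hyN k
      exact mul_mem (hAN a ha) hbN
    haveI hPnormal : (Subgroup.zpowers u).Normal := Subgroup.normalizer_eq_top_iff.mp hN
    have hPle : Subgroup.zpowers u ≤ A.normalCore :=
      Subgroup.normal_le_normalCore.mpr hPA
    rw [hcore] at hPle
    have hu1 : u = 1 := by
      have := hPle (Subgroup.mem_zpowers u)
      simpa [Subgroup.mem_bot] using this
    rw [hu1, orderOf_one] at hu
    exact hp.one_lt.ne' hu.symm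
  -- Counting: |G/A| ≥ |A| + 1 via the injection `Option A → G/A`,
  -- but |G/A| ≤ |B| ≤ |A|.
  classical
  haveI : Finite (G ⧸ A) := Quotient.finite _
  have hinj : Function.Injective
      (fun o : Option A => Option.elim o ((1 : G) : G ⧸ A)
        (fun d => (((d : G) * y : G) : G ⧸ A))) := by
    intro o1 o2 heq
    match o1, o2 with
    | none, none => rfl
    | some d, some d' =>
      simp only [Option.elim] at heq
      have h1 : ((d : G) * y)⁻¹ * ((d' : G) * y) ∈ A := (QuotientGroup.eq).mp heq
      have h2 : ((d : G) * y)⁻¹ * ((d' : G) * y) = y⁻¹ * ((d : G)⁻¹ * d') * y := by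
        group
      rw [h2] at h1
      have h3 : ((d : G)⁻¹ * d') ∈ A := mul_mem (inv_mem d.2) d'.2
      have h4 := hS _ h3 h1
      have h5 : (d : G) = d' := by
        have := congrArg (fun z => (d : G) * z) h4
        simpa [mul_assoc] using this.symm
      exact congrArg some (Subtype.ext h5)
    | some d, none =>
      exfalso
      simp only [Option.elim] at heq
      have h1 : ((d : G) * y)⁻¹ * 1 ∈ A := (QuotientGroup.eq).mp heq
      have h2 : ((d : G) * y)⁻¹ * 1 = y⁻¹ * (d : G)⁻¹ := by group
      rw [h2] at h1
      have h3 : (d : G) * y ∈ A := by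
        have := inv_mem h1
        simpa [mul_inv_rev] using this
      have h4 : y ∈ A := by
        have := mul_mem (inv_mem d.2) h3
        simpa [mul_assoc] using this
      exact hyA h4
    | none, some d =>
      exfalso
      simp only [Option.elim] at heq
      have h1 : (1 : G)⁻¹ * ((d : G) * y) ∈ A := (QuotientGroup.eq).mp heq
      have h2 : (1 : G)⁻¹ * ((d : G) * y) = (d : G) * y := by group
      rw [h2] at h1
      have h4 : y ∈ A := by
        have := mul_mem (inv_mem d.2) h1
        simpa [mul_assoc] using this
      exact hyA h4
  have hsurj : Function.Surjective (fun e : B => (((e : G)) : G ⧸ A)) := by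
    intro q
    induction q using QuotientGroup.induction_on with
    | H g =>
      obtain ⟨a, ha, b, hb, hg⟩ := hprod g⁻¹
      refine ⟨⟨b⁻¹, inv_mem hb⟩, ?_⟩
      simp only
      rw [QuotientGroup.eq]
      have hginv : g = b⁻¹ * a⁻¹ := by
        rw [← mul_inv_rev, ← hg, inv_inv]
      rw [hginv]
      have h2 : (b⁻¹)⁻¹ * (b⁻¹ * a⁻¹) = a⁻¹ := by group
      rw [h2]
      exact inv_mem ha
  have hcard1 : Nat.card (Option A) ≤ Nat.card (G ⧸ A) :=
    Nat.card_le_card_of_injective _ hinj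
  have hcard2 : Nat.card (G ⧸ A) ≤ Nat.card B :=
    Nat.card_le_card_of_surjective _ hsurj
  have hcard3 : Nat.card (Option A) = Nat.card A + 1 := Finite.card_option
  omega

end Aux

section Lift

variable {G : Type*} [Group G]

/-- Lift a supersolvable series through a quotient by a cyclic normal subgroup. -/
lemma isSupersolvable_of_quotient (N : Subgroup G) [N.Normal] (hN : IsCyclic N)
    (h : IsSupersolvable (G ⧸ N)) : IsSupersolvable G := by
  obtain ⟨m, t, hmono, h0, hlast, hnorm, hcyc⟩ := h
  set π := QuotientGroup.mk' N with hπ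
  refine ⟨m + 1, Fin.cons ⊥ (fun i => (t i).comap π), ?_, ?_, ?_, ?_, ?_⟩
  · intro i j hij
    induction i using Fin.cases with
    | zero =>
      rw [Fin.cons_zero]
      exact bot_le
    | succ i =>
      induction j using Fin.cases with
      | zero =>
        exact absurd (Fin.le_zero_iff.mp hij) (Fin.succ_ne_zero i)
      | succ j =>
        rw [Fin.cons_succ, Fin.cons_succ]
        exact Subgroup.comap_mono (hmono (Fin.succ_le_succ_iff.mp hij))
  · rw [Fin.cons_zero]
  · show (Fin.cons ⊥ (fun i => (t i).comap π) : Fin (m + 2) → Subgroup G)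
        (Fin.last m).succ = ⊤
    rw [Fin.cons_succ, hlast, Subgroup.comap_top]
  · intro i
    induction i using Fin.cases with
    | zero =>
      rw [Fin.cons_zero]
      infer_instance
    | succ i =>
      rw [Fin.cons_succ]
      exact Subgroup.Normal.comap (hnorm _) π
  · intro i
    induction i using Fin.cases with
    | zero =>
      have hsucc : (Fin.cons ⊥ (fun i => (t i).comap π) : Fin (m + 2) → Subgroup G)
          (Fin.succ 0) = N := by
        rw [Fin.cons_succ, h0]
        exact (MonoidHom.comap_bot π).trans (QuotientGroup.ker_mk' N)
      have hcast : (Fin.cons ⊥ (fun i => (t i).comap π) : Fin (m + 2) → Subgroup G)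
          (Fin.castSucc 0) = ⊥ := by
        rw [Fin.castSucc_zero, Fin.cons_zero]
      obtain ⟨g, hg⟩ := hN.exists_generator
      refine ⟨(g : G), ?_, ?_⟩
      · rw [hsucc]; exact g.2
      · intro z hz
        rw [hsucc] at hz
        obtain ⟨k, hk⟩ := Subgroup.mem_zpowers_iff.mp (hg ⟨z, hz⟩)
        refine ⟨k, ?_⟩
        rw [hcast]
        have h2 := congrArg (Subtype.val) hk
        push_cast at h2
        simp [Subgroup.mem_bot, h2]
    | succ i =>
      obtain ⟨xq, hxq, hx⟩ := hcyc i
      obtain ⟨x, hxeq⟩ := QuotientGroup.mk'_surjective N xq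
      have hsucc : (Fin.cons ⊥ (fun j => (t j).comap π) : Fin (m + 2) → Subgroup G)
          (Fin.succ (Fin.succ i)) = (t (Fin.succ i)).comap π := by
        rw [Fin.cons_succ]
      have hcast : (Fin.cons ⊥ (fun j => (t j).comap π) : Fin (m + 2) → Subgroup G)
          (Fin.castSucc (Fin.succ i)) = (t (Fin.castSucc i)).comap π := by
        rw [← Fin.succ_castSucc, Fin.cons_succ]
      refine ⟨x, ?_, ?_⟩
      · rw [hsucc, Subgroup.mem_comap, hxeq]
        exact hxq
      · intro z hz
        rw [hsucc, Subgroup.mem_comap] at hz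
        obtain ⟨k, hk⟩ := hx (π z) hz
        refine ⟨k, ?_⟩
        rw [hcast, Subgroup.mem_comap]
        have : π (z * (x ^ k)⁻¹) = π z * (xq ^ k)⁻¹ := by
          rw [map_mul, map_inv, map_zpow, hxeq]
        rw [this]
        exact hk

end Lift

section Main

universe u

lemma exists_cyclic_normal {G : Type u} [Group G] [Finite G] (A B : Subgroup G)
    (hA : IsCyclic A) (hB : IsCyclic B)
    (hprod : ∀ g : G, ∃ a ∈ A, ∃ b ∈ B, g = a * b)
    (htop : (⊤ : Subgroup G) ≠ ⊥) :
    ∃ N : Subgroup G, N.Normal ∧ N ≠ ⊥ ∧ IsCyclic N := by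
  have hprod' : ∀ g : G, ∃ b ∈ B, ∃ a ∈ A, g = b * a := by
    intro g
    obtain ⟨a, ha, b, hb, hg⟩ := hprod g⁻¹
    exact ⟨b⁻¹, inv_mem hb, a⁻¹, inv_mem ha, by rw [← mul_inv_rev, ← hg, inv_inv]⟩
  rcases le_total (Nat.card B) (Nat.card A) with hle | hle
  · refine ⟨A.normalCore, inferInstance,
      normalCore_ne_bot A B hA hB hprod hle htop, ?_⟩
    haveI : IsCyclic A := hA
    exact Subgroup.isCyclic_of_le A.normalCore_le
  · refine ⟨B.normalCore, inferInstance,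
      normalCore_ne_bot B A hB hA hprod' hle htop, ?_⟩
    haveI : IsCyclic B := hB
    exact Subgroup.isCyclic_of_le B.normalCore_le

lemma isCyclic_map {G H : Type*} [Group G] [Group H] (A : Subgroup G)
    (hA : IsCyclic A) (f : G →* H) : IsCyclic (A.map f) := by
  have h1 : A.map f = ((f.comp A.subtype)).range := by
    rw [MonoidHom.range_comp, Subgroup.range_subtype]
  rw [h1]
  haveI : IsCyclic A := hA
  exact isCyclic_of_surjective (f.comp A.subtype).rangeRestrict
    (f.comp A.subtype).rangeRestrict_surjective

lemma main_aux : ∀ (n : ℕ) (G : Type u) [Group G] [Finite G] (A B : Subgroup G),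
    IsCyclic A → IsCyclic B → (∀ g : G, ∃ a ∈ A, ∃ b ∈ B, g = a * b) →
    Nat.card G ≤ n → IsSupersolvable G := by
  intro n
  induction n with
  | zero =>
    intro G _ _ A B _ _ _ hle
    have : 0 < Nat.card G := Nat.card_pos
    omega
  | succ n ih =>
    intro G _ _ A B hA hB hprod hle
    by_cases hG : Nat.card G = 1
    · -- trivial group
      have hsub : Subsingleton G := (Nat.card_eq_one_iff_unique.mp hG).1
      refine ⟨0, fun _ => ⊥, monotone_const, rfl, ?_, fun _ => inferInstance, fun i => Fin.elim0 i⟩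
      have : (⊥ : Subgroup G) = ⊤ := by
        ext x
        simp [Subgroup.mem_bot, Subgroup.mem_top, Subsingleton.elim x 1]
      rw [this]
    · have htop : (⊤ : Subgroup G) ≠ ⊥ := by
        intro h
        apply hG
        rw [← Subgroup.card_top (G := G), h, Subgroup.card_bot]
      obtain ⟨N, hNnorm, hNbot, hNcyc⟩ := exists_cyclic_normal A B hA hB hprod htop
      haveI := hNnorm
      haveI : Finite (G ⧸ N) := Quotient.finite _
      have hcard : Nat.card (G ⧸ N) < Nat.card G := by
        have h1 : Nat.card G = Nat.card (G ⧸ N) * Nat.card N :=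
          Subgroup.card_eq_card_quotient_mul_card_subgroup N
        have h2 : 1 < Nat.card N := (Subgroup.one_lt_card_iff_ne_bot (H := N)).mpr hNbot
        have h3 : 0 < Nat.card (G ⧸ N) := Nat.card_pos
        nlinarith
      set π := QuotientGroup.mk' N with hπ
      have hprodQ : ∀ q : G ⧸ N, ∃ a ∈ A.map π, ∃ b ∈ B.map π, q = a * b := by
        intro q
        obtain ⟨g, rfl⟩ := QuotientGroup.mk'_surjective N q
        obtain ⟨a, ha, b, hb, rfl⟩ := hprod g
        exact ⟨π a, Subgroup.mem_map_of_mem π ha, π b, Subgroup.mem_map_of_mem π hb,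
          by rw [map_mul]⟩
      have hQ : IsSupersolvable (G ⧸ N) :=
        ih (G ⧸ N) (A.map π) (B.map π)
          (isCyclic_map A hA π) (isCyclic_map B hB π) hprodQ (by omega)
      exact isSupersolvable_of_quotient N hNcyc hQ

end Main

/-- A finite product of two cyclic subgroups is supersoluble. -/
theorem finite_product_of_cyclics_supersolvable {G : Type*} [Group G] [Finite G]
    (A B : Subgroup G) (hA : IsCyclic A) (hB : IsCyclic B)
    (hprod : ∀ g : G, ∃ a ∈ A, ∃ b ∈ B, g = a * b) :
    IsSupersolvable G :=
  main_aux (Nat.card G) G A B hA hB hprod le_rfl
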